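/- arXiv:2006.10742 — 6 statements merged into one kernel-verified Lean document; each statement's English description precedes it below -/
import Mathlib

section
/- For a finite-state MDP with fixed policy π, the operator F defined by F(d)(s_i,s_j) = (1−c)·|R^π_{s_i} − R^π_{s_j}| + c·W₁(d)(P^π_{s_i}, P^π_{s_j}), where W₁(d) denotes the 1-Wasserstein distance induced by the pseudometric d, is a contraction with modulus c on the space of bounded pseudometrics with the supremum metric, for any c ∈ [0,1). -/
open Finset

structure IsPseudometric {S : Type*} (d : S → S → ℝ) : Prop where
  nonneg : ∀ x y, 0 ≤ d x y
  refl : ∀ x, d x x = 0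
  symm : ∀ x y, d x y = d y x
  triangle : ∀ x y z, d x z ≤ d x y + d y z

def IsProb {S : Type*} [Fintype S] (p : S → ℝ) : Prop :=
  (∀ s, 0 ≤ p s) ∧ ∑ s, p s = 1

def IsCoupling {S : Type*} [Fintype S] (γ : S → S → ℝ) (p q : S → ℝ) : Prop :=
  (∀ x y, 0 ≤ γ x y) ∧ (∀ x, ∑ y, γ x y = p x) ∧ (∀ y, ∑ x, γ x y = q y)

noncomputable def W1 {S : Type*} [Fintype S] (d : S → S → ℝ) (p q : S → ℝ) : ℝ :=
  sInf { r | ∃ γ : S → S → ℝ, IsCoupling γ p q ∧ r = ∑ x, ∑ y, d x y * γ x y }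

lemma W1_le_aux {S : Type*} [Fintype S] {d d' : S → S → ℝ} {p q : S → ℝ}
    (hp : IsProb p) (hq : IsProb q) (hd : ∀ x y, 0 ≤ d x y)
    {D : ℝ} (hD : ∀ x y, |d x y - d' x y| ≤ D) :
    W1 d p q ≤ W1 d' p q + D := by
  have hA'ne : ({ r | ∃ γ : S → S → ℝ, IsCoupling γ p q ∧ r = ∑ x, ∑ y, d' x y * γ x y }).Nonempty := by
    refine ⟨_, fun x y => p x * q y, ⟨fun x y => mul_nonneg (hp.1 x) (hq.1 y),
      fun x => by rw [← Finset.mul_sum, hq.2, mul_one],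
      fun y => by rw [← Finset.sum_mul, hp.2, one_mul]⟩, rfl⟩
  have hbdd : BddBelow { r | ∃ γ : S → S → ℝ, IsCoupling γ p q ∧ r = ∑ x, ∑ y, d x y * γ x y } := by
    refine ⟨0, fun r hr => ?_⟩
    obtain ⟨γ, hγ, rfl⟩ := hr
    exact Finset.sum_nonneg fun x _ => Finset.sum_nonneg fun y _ =>
      mul_nonneg (hd x y) (hγ.1 x y)
  rw [show W1 d p q ≤ W1 d' p q + D ↔ W1 d p q - D ≤ W1 d' p q by constructor <;> intro <;> linarith]
  apply le_csInf hA'ne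
  rintro r ⟨γ, hγ, rfl⟩
  have h1 : W1 d p q ≤ ∑ x, ∑ y, d x y * γ x y := csInf_le hbdd ⟨γ, hγ, rfl⟩
  have hsum1 : ∑ x, ∑ y, γ x y = 1 := by
    simp only [hγ.2.1]; exact hp.2
  have h2 : ∑ x, ∑ y, d x y * γ x y ≤ (∑ x, ∑ y, d' x y * γ x y) + D := by
    have : ∑ x, ∑ y, d x y * γ x y - ∑ x, ∑ y, d' x y * γ x y
        = ∑ x, ∑ y, (d x y - d' x y) * γ x y := by
      rw [← Finset.sum_sub_distrib]
      congr 1; ext x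
      rw [← Finset.sum_sub_distrib]
      congr 1; ext y; ring
    have hle : ∑ x, ∑ y, (d x y - d' x y) * γ x y ≤ ∑ x, ∑ y, D * γ x y := by
      refine Finset.sum_le_sum fun x _ => Finset.sum_le_sum fun y _ => ?_
      exact mul_le_mul_of_nonneg_right (le_trans (le_abs_self _) (hD x y)) (hγ.1 x y)
    have : ∑ x, ∑ y, D * γ x y = D := by
      simp only [← Finset.mul_sum, hγ.2.1]
      rw [hp.2, mul_one]
    linarith [hle, this, ‹∑ x, ∑ y, d x y * γ x y - ∑ x, ∑ y, d' x y * γ x y = _›]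
  linarith

noncomputable def bisimF {S : Type*} [Fintype S] (R : S → ℝ) (P : S → S → ℝ) (c : ℝ)
    (d : S → S → ℝ) : S → S → ℝ :=
  fun x y => (1 - c) * |R x - R y| + c * W1 d (P x) (P y)

noncomputable def bisimFA {S A : Type*} [Fintype S] [Fintype A] [Nonempty A]
    (R : S → A → ℝ) (P : S → A → S → ℝ) (c : ℝ) (d : S → S → ℝ) : S → S → ℝ :=
  fun x y => ⨆ a : A, ((1 - c) * |R x a - R y a| + c * W1 d (P x a) (P y a))

/-- the on-policy bisimulation operator is a contraction with modulus
`c` on bounded pseudometrics with the supremum metric, for any `c ∈ [0,1)`. -/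
theorem stmt_2 {S : Type*} [Fintype S]
    (R : S → ℝ) (P : S → S → ℝ) (hP : ∀ s, IsProb (P s))
    (c : ℝ) (hc0 : 0 ≤ c) (hc1 : c < 1)
    (d d' : S → S → ℝ) (hd : IsPseudometric d) (hd' : IsPseudometric d') :
    ⨆ p : S × S, |bisimF R P c d p.1 p.2 - bisimF R P c d' p.1 p.2| ≤
      c * ⨆ p : S × S, |d p.1 p.2 - d' p.1 p.2| := by
  rcases isEmpty_or_nonempty S with hS | hS
  · haveI : IsEmpty (S × S) := ⟨fun p => hS.elim p.1⟩
    rw [Real.iSup_of_isEmpty, Real.iSup_of_isEmpty, mul_zero]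
  set D := ⨆ p : S × S, |d p.1 p.2 - d' p.1 p.2| with hDdef
  have hbdd : BddAbove (Set.range fun p : S × S => |d p.1 p.2 - d' p.1 p.2|) :=
    (Set.finite_range _).bddAbove
  have hD : ∀ x y, |d x y - d' x y| ≤ D := fun x y => le_ciSup hbdd (x, y)
  refine ciSup_le fun ⟨x, y⟩ => ?_
  have hW : |W1 d (P x) (P y) - W1 d' (P x) (P y)| ≤ D := by
    rw [abs_sub_le_iff]
    constructor
    · linarith [W1_le_aux (hP x) (hP y) hd.nonneg hD]
    · have hD' : ∀ a b, |d' a b - d a b| ≤ D := fun a b => by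
        rw [abs_sub_comm]; exact hD a b
      linarith [W1_le_aux (hP x) (hP y) hd'.nonneg hD']
  have : |bisimF R P c d x y - bisimF R P c d' x y|
      = c * |W1 d (P x) (P y) - W1 d' (P x) (P y)| := by
    simp only [bisimF]
    rw [show (1 - c) * |R x - R y| + c * W1 d (P x) (P y) -
        ((1 - c) * |R x - R y| + c * W1 d' (P x) (P y))
        = c * (W1 d (P x) (P y) - W1 d' (P x) (P y)) by ring,
      abs_mul, abs_of_nonneg hc0]
  rw [this]
  exact mul_le_mul_of_nonneg_left hW hc0
end

section
/- For a finite-state MDP with fixed policy π and constant c ∈ [0,1), the operator F(d)(s_i,s_j) = (1−c)·|R^π_{s_i} − R^π_{s_j}| + c·W₁(d)(P^π_{s_i}, P^π_{s_j}) has a unique fixed point d̃ in the space of bounded pseudometrics, and d̃ is itself a pseudometric (the π-bisimulation metric). -/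
open Finset

section Aux

variable {S : Type*} [Fintype S]

/-- The coupling set defining `W1`. -/
def cSet (d : S → S → ℝ) (p q : S → ℝ) : Set ℝ :=
  { r | ∃ γ : S → S → ℝ, IsCoupling γ p q ∧ r = ∑ x, ∑ y, d x y * γ x y }

lemma W1_eq (d : S → S → ℝ) (p q : S → ℝ) : W1 d p q = sInf (cSet d p q) := rfl

lemma prod_coupling {p q : S → ℝ} (hp : IsProb p) (hq : IsProb q) :
    IsCoupling (fun x y => p x * q y) p q := by
  refine ⟨fun x y => mul_nonneg (hp.1 x) (hq.1 y), fun x => ?_, fun y => ?_⟩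
  · rw [← Finset.mul_sum, hq.2, mul_one]
  · rw [← Finset.sum_mul, hp.2, one_mul]

lemma cSet_nonempty (d : S → S → ℝ) {p q : S → ℝ} (hp : IsProb p) (hq : IsProb q) :
    (cSet d p q).Nonempty :=
  ⟨_, fun x y => p x * q y, prod_coupling hp hq, rfl⟩

lemma coupling_total {γ : S → S → ℝ} {p q : S → ℝ} (h : IsCoupling γ p q) (hp : ∑ s, p s = 1) :
    ∑ x, ∑ y, γ x y = 1 := by
  rw [Finset.sum_congr rfl fun x _ => h.2.1 x, hp]

lemma coupling_col_zero {γ : S → S → ℝ} {p q : S → ℝ} (h : IsCoupling γ p q) {y : S} (hq : q y = 0)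
    (x : S) : γ x y = 0 := by
  have hs : ∑ x, γ x y = 0 := by rw [h.2.2 y, hq]
  exact (Finset.sum_eq_zero_iff_of_nonneg (fun i _ => h.1 i y)).1 hs x (Finset.mem_univ x)

lemma coupling_row_zero {γ : S → S → ℝ} {p q : S → ℝ} (h : IsCoupling γ p q) {x : S} (hp : p x = 0)
    (y : S) : γ x y = 0 := by
  have hs : ∑ y, γ x y = 0 := by rw [h.2.1 x, hp]
  exact (Finset.sum_eq_zero_iff_of_nonneg (fun i _ => h.1 x i)).1 hs y (Finset.mem_univ y)

lemma cost_abs_le {d γ : S → S → ℝ} {p q : S → ℝ} (h : IsCoupling γ p q) (hp : ∑ s, p s = 1)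
    {D : ℝ} (hD : ∀ x y, |d x y| ≤ D) (_hD0 : 0 ≤ D) :
    |∑ x, ∑ y, d x y * γ x y| ≤ D := by
  calc |∑ x, ∑ y, d x y * γ x y| ≤ ∑ x, |∑ y, d x y * γ x y| :=
        Finset.abs_sum_le_sum_abs _ _
    _ ≤ ∑ x, ∑ y, |d x y * γ x y| :=
        Finset.sum_le_sum fun x _ => Finset.abs_sum_le_sum_abs _ _
    _ = ∑ x, ∑ y, |d x y| * γ x y := by
        refine Finset.sum_congr rfl fun x _ => Finset.sum_congr rfl fun y _ => ?_
        rw [abs_mul, abs_of_nonneg (h.1 x y)]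
    _ ≤ ∑ x, ∑ y, D * γ x y := by
        refine Finset.sum_le_sum fun x _ => Finset.sum_le_sum fun y _ =>
          mul_le_mul_of_nonneg_right (hD x y) (h.1 x y)
    _ = D * ∑ x, ∑ y, γ x y := by simp [Finset.mul_sum]
    _ = D := by rw [coupling_total h hp, mul_one]

lemma abs_le_sumAbs (d : S → S → ℝ) (x y : S) : |d x y| ≤ ∑ a, ∑ b, |d a b| := by
  calc |d x y| ≤ ∑ b, |d x b| :=
        Finset.single_le_sum (f := fun b => |d x b|) (fun i _ => abs_nonneg _)
          (Finset.mem_univ y)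
    _ ≤ ∑ a, ∑ b, |d a b| :=
        Finset.single_le_sum (f := fun a => ∑ b, |d a b|)
          (fun i _ => Finset.sum_nonneg fun j _ => abs_nonneg _) (Finset.mem_univ x)

lemma cSet_bddBelow (d : S → S → ℝ) {p q : S → ℝ} (hp : ∑ s, p s = 1) :
    BddBelow (cSet d p q) := by
  refine ⟨-(∑ a, ∑ b, |d a b|), fun r hr => ?_⟩
  obtain ⟨γ, hγ, rfl⟩ := hr
  have := cost_abs_le hγ hp (abs_le_sumAbs d)
    (Finset.sum_nonneg fun a _ => Finset.sum_nonneg fun b _ => abs_nonneg _)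
  linarith [neg_abs_le (∑ x, ∑ y, d x y * γ x y)]

lemma W1_le_cost {d γ : S → S → ℝ} {p q : S → ℝ} (hp : ∑ s, p s = 1) (h : IsCoupling γ p q) :
    W1 d p q ≤ ∑ x, ∑ y, d x y * γ x y :=
  csInf_le (cSet_bddBelow d hp) ⟨γ, h, rfl⟩

lemma W1_nonneg {d : S → S → ℝ} (hd : ∀ x y, 0 ≤ d x y) {p q : S → ℝ}
    (hp : IsProb p) (hq : IsProb q) : 0 ≤ W1 d p q := by
  refine le_csInf (cSet_nonempty d hp hq) fun r hr => ?_
  obtain ⟨γ, hγ, rfl⟩ := hr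
  exact Finset.sum_nonneg fun x _ => Finset.sum_nonneg fun y _ =>
    mul_nonneg (hd x y) (hγ.1 x y)

lemma W1_sub_le {d d' : S → S → ℝ} {p q : S → ℝ} (hp : IsProb p) (hq : IsProb q)
    {D : ℝ} (hD : ∀ x y, |d x y - d' x y| ≤ D) (hD0 : 0 ≤ D) :
    W1 d p q ≤ W1 d' p q + D := by
  have h : W1 d p q - D ≤ W1 d' p q := by
    refine le_csInf (cSet_nonempty d' hp hq) fun r hr => ?_
    obtain ⟨γ, hγ, rfl⟩ := hr
    have h1 : W1 d p q ≤ ∑ x, ∑ y, d x y * γ x y := W1_le_cost hp.2 hγ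
    have h2 : |∑ x, ∑ y, (d x y - d' x y) * γ x y| ≤ D :=
      cost_abs_le (d := fun x y => d x y - d' x y) hγ hp.2 hD hD0
    have h3 : ∑ x, ∑ y, (d x y - d' x y) * γ x y
        = (∑ x, ∑ y, d x y * γ x y) - ∑ x, ∑ y, d' x y * γ x y := by
      rw [← Finset.sum_sub_distrib]
      refine Finset.sum_congr rfl fun x _ => ?_
      rw [← Finset.sum_sub_distrib]
      exact Finset.sum_congr rfl fun y _ => by ring
    rw [h3] at h2
    have := abs_le.1 h2
    linarith
  linarith

lemma abs_W1_sub_le {d d' : S → S → ℝ} {p q : S → ℝ} (hp : IsProb p) (hq : IsProb q)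
    {D : ℝ} (hD : ∀ x y, |d x y - d' x y| ≤ D) (hD0 : 0 ≤ D) :
    |W1 d p q - W1 d' p q| ≤ D := by
  have h1 := W1_sub_le hp hq hD hD0
  have h2 := W1_sub_le (d := d') (d' := d) hp hq
    (fun x y => by rw [abs_sub_comm]; exact hD x y) hD0
  rw [abs_le]
  constructor <;> linarith

lemma W1_symm {d : S → S → ℝ} (hsymm : ∀ x y, d x y = d y x) (p q : S → ℝ) :
    W1 d p q = W1 d q p := by
  have key : ∀ p q : S → ℝ, cSet d p q ⊆ cSet d q p := by
    rintro p q r ⟨γ, hγ, rfl⟩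
    refine ⟨fun a b => γ b a, ⟨fun a b => hγ.1 b a, hγ.2.2, hγ.2.1⟩, ?_⟩
    rw [Finset.sum_comm]
    exact Finset.sum_congr rfl fun a _ => Finset.sum_congr rfl fun b _ => by
      rw [hsymm a b]
  rw [W1_eq, W1_eq, Set.Subset.antisymm (key p q) (key q p)]

lemma W1_self {d : S → S → ℝ} (hd : IsPseudometric d) {p : S → ℝ} (hp : IsProb p) :
    W1 d p p = 0 := by
  classical
  refine le_antisymm ?_ (W1_nonneg hd.nonneg hp hp)
  have hcoup : IsCoupling (fun x y => if x = y then p x else 0) p p := by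
    refine ⟨fun x y => by dsimp only; split <;> simp [hp.1 x], fun x => by simp, fun y => by simp⟩
  have := W1_le_cost (d := d) hp.2 hcoup
  calc W1 d p p ≤ ∑ x, ∑ y, d x y * (if x = y then p x else 0) := this
    _ = 0 := by
      refine Finset.sum_eq_zero fun x _ => ?_
      refine Finset.sum_eq_zero fun y _ => ?_
      by_cases h : x = y
      · subst h; simp [hd.refl x]
      · simp [h]

lemma W1_triangle {d : S → S → ℝ} (hd : IsPseudometric d) {p q r : S → ℝ}
    (hp : IsProb p) (hq : IsProb q) (hr : IsProb r) :
    W1 d p r ≤ W1 d p q + W1 d q r := by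
  have core : ∀ γ₁, IsCoupling γ₁ p q → ∀ γ₂, IsCoupling γ₂ q r →
      W1 d p r ≤ (∑ x, ∑ y, d x y * γ₁ x y) + ∑ y, ∑ z, d y z * γ₂ y z := by
    intro γ₁ h₁ γ₂ h₂
    set g : S → S → S → ℝ := fun x y z => γ₁ x y / q y * γ₂ y z with hg
    have hg0 : ∀ x y z, 0 ≤ g x y z := fun x y z =>
      mul_nonneg (div_nonneg (h₁.1 x y) (hq.1 y)) (h₂.1 y z)
    have hsz : ∀ x y, ∑ z, g x y z = γ₁ x y := by
      intro x y
      rw [← Finset.mul_sum, h₂.2.1 y]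
      by_cases hy : q y = 0
      · rw [hy, coupling_col_zero h₁ hy x]; simp
      · field_simp
    have hsx : ∀ y z, ∑ x, g x y z = γ₂ y z := by
      intro y z
      have : ∑ x, g x y z = (∑ x, γ₁ x y) / q y * γ₂ y z := by
        rw [Finset.sum_div, Finset.sum_mul]
      rw [this, h₁.2.2 y]
      by_cases hy : q y = 0
      · rw [hy, coupling_row_zero h₂ hy z]; simp
      · field_simp
    set γ : S → S → ℝ := fun x z => ∑ y, g x y z with hγdef
    have hcoup : IsCoupling γ p r := by
      refine ⟨fun x z => Finset.sum_nonneg fun y _ => hg0 x y z, fun x => ?_, fun z => ?_⟩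
      · rw [Finset.sum_comm]
        calc ∑ y, ∑ z, g x y z = ∑ y, γ₁ x y :=
              Finset.sum_congr rfl fun y _ => hsz x y
          _ = p x := h₁.2.1 x
      · calc ∑ x, ∑ y, g x y z = ∑ y, ∑ x, g x y z := by rw [Finset.sum_comm]
          _ = ∑ y, γ₂ y z := Finset.sum_congr rfl fun y _ => hsx y z
          _ = r z := h₂.2.2 z
    refine (W1_le_cost hp.2 hcoup).trans ?_
    have step1 : ∑ x, ∑ z, d x z * γ x z ≤
        ∑ x, ∑ z, ∑ y, (d x y + d y z) * g x y z := by
      refine Finset.sum_le_sum fun x _ => Finset.sum_le_sum fun z _ => ?_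
      rw [Finset.mul_sum]
      exact Finset.sum_le_sum fun y _ =>
        mul_le_mul_of_nonneg_right (hd.triangle x y z) (hg0 x y z)
    refine step1.trans ?_
    have split : ∑ x, ∑ z, ∑ y, (d x y + d y z) * g x y z
        = (∑ x, ∑ z, ∑ y, d x y * g x y z) + ∑ x, ∑ z, ∑ y, d y z * g x y z := by
      rw [← Finset.sum_add_distrib]
      refine Finset.sum_congr rfl fun x _ => ?_
      rw [← Finset.sum_add_distrib]
      refine Finset.sum_congr rfl fun z _ => ?_
      rw [← Finset.sum_add_distrib]
      exact Finset.sum_congr rfl fun y _ => by ring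
    rw [split]
    have t1 : ∑ x, ∑ z, ∑ y, d x y * g x y z = ∑ x, ∑ y, d x y * γ₁ x y := by
      refine Finset.sum_congr rfl fun x _ => ?_
      rw [Finset.sum_comm]
      refine Finset.sum_congr rfl fun y _ => ?_
      rw [← Finset.mul_sum, hsz x y]
    have t2 : ∑ x, ∑ z, ∑ y, d y z * g x y z = ∑ y, ∑ z, d y z * γ₂ y z := by
      have h1 : ∀ x : S, ∑ z, ∑ y, d y z * g x y z = ∑ y, ∑ z, d y z * g x y z :=
        fun x => by rw [Finset.sum_comm]
      rw [Finset.sum_congr rfl fun x _ => h1 x, Finset.sum_comm]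
      refine Finset.sum_congr rfl fun y _ => ?_
      rw [Finset.sum_comm]
      refine Finset.sum_congr rfl fun z _ => ?_
      rw [← Finset.mul_sum, hsx y z]
    rw [t1, t2]
  -- now close over the two infima
  have step : W1 d p r - W1 d q r ≤ W1 d p q := by
    refine le_csInf (cSet_nonempty d hp hq) fun r₁ hr₁ => ?_
    obtain ⟨γ₁, h₁, rfl⟩ := hr₁
    have : W1 d p r - (∑ x, ∑ y, d x y * γ₁ x y) ≤ W1 d q r := by
      refine le_csInf (cSet_nonempty d hq hr) fun r₂ hr₂ => ?_
      obtain ⟨γ₂, h₂, rfl⟩ := hr₂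
      linarith [core γ₁ h₁ γ₂ h₂]
    linarith
  linarith

lemma bisimF_pseudometric {R : S → ℝ} {P : S → S → ℝ} (hP : ∀ s, IsProb (P s))
    {c : ℝ} (hc0 : 0 ≤ c) (hc1 : c ≤ 1) {d : S → S → ℝ} (hd : IsPseudometric d) :
    IsPseudometric (bisimF R P c d) := by
  constructor
  · intro x y
    exact add_nonneg (mul_nonneg (by linarith) (abs_nonneg _))
      (mul_nonneg hc0 (W1_nonneg hd.nonneg (hP x) (hP y)))
  · intro x
    simp [bisimF, W1_self hd (hP x)]
  · intro x y
    simp only [bisimF]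
    rw [abs_sub_comm, W1_symm hd.symm]
  · intro x y z
    simp only [bisimF]
    have h1 : |R x - R z| ≤ |R x - R y| + |R y - R z| := abs_sub_le _ _ _
    have h2 : W1 d (P x) (P z) ≤ W1 d (P x) (P y) + W1 d (P y) (P z) :=
      W1_triangle hd (hP x) (hP y) (hP z)
    nlinarith [mul_le_mul_of_nonneg_left h1 (by linarith : (0:ℝ) ≤ 1 - c),
      mul_le_mul_of_nonneg_left h2 hc0]

end Aux

/-- the on-policy bisimulation operator has a unique fixed point among
(bounded, automatic by finiteness) pseudometrics, which is itself a pseudometric. -/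
theorem stmt_3 {S : Type*} [Fintype S]
    (R : S → ℝ) (P : S → S → ℝ) (hP : ∀ s, IsProb (P s))
    (c : ℝ) (hc0 : 0 ≤ c) (hc1 : c < 1) :
    ∃ dt : S → S → ℝ, IsPseudometric dt ∧ bisimF R P c dt = dt ∧
      ∀ d : S → S → ℝ, IsPseudometric d → bisimF R P c d = d → d = dt := by
  set F : (S → S → ℝ) → (S → S → ℝ) := bisimF R P c with hF
  set K : NNReal := ⟨c, hc0⟩ with hK
  -- Lipschitz estimate
  have hlip : LipschitzWith K F := by
    refine LipschitzWith.of_dist_le_mul fun d d' => ?_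
    show dist (F d) (F d') ≤ c * dist d d'
    have hdd' : (0:ℝ) ≤ dist d d' := dist_nonneg
    have hptwise : ∀ a b : S, |d a b - d' a b| ≤ dist d d' := by
      intro a b
      calc |d a b - d' a b| = dist (d a b) (d' a b) := (Real.dist_eq _ _).symm
        _ ≤ dist (d a) (d' a) := dist_le_pi_dist (d a) (d' a) b
        _ ≤ dist d d' := dist_le_pi_dist d d' a
    rw [dist_pi_le_iff (mul_nonneg hc0 hdd')]
    intro x
    rw [dist_pi_le_iff (mul_nonneg hc0 hdd')]
    intro y
    have hW : |W1 d (P x) (P y) - W1 d' (P x) (P y)| ≤ dist d d' :=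
      abs_W1_sub_le (hP x) (hP y) hptwise hdd'
    have heq : F d x y - F d' x y = c * (W1 d (P x) (P y) - W1 d' (P x) (P y)) := by
      simp only [hF, bisimF]; ring
    rw [Real.dist_eq, heq, abs_mul, abs_of_nonneg hc0]
    exact mul_le_mul_of_nonneg_left hW hc0
  have hcontr : ContractingWith K F := ⟨by exact_mod_cast hc1, hlip⟩
  set dt : S → S → ℝ := ContractingWith.fixedPoint F hcontr with hdt
  have hfix : F dt = dt := hcontr.fixedPoint_isFixedPt
  -- iterates from zero
  set d0 : S → S → ℝ := fun _ _ => 0 with hd0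
  have hd0p : IsPseudometric d0 := ⟨fun _ _ => le_refl 0, fun _ => rfl, fun _ _ => rfl,
    fun _ _ _ => by simp [hd0]⟩
  have hiter : ∀ n : ℕ, IsPseudometric (F^[n] d0) := by
    intro n
    induction n with
    | zero => simpa using hd0p
    | succ n ih =>
      rw [Function.iterate_succ_apply']
      exact bisimF_pseudometric hP hc0 hc1.le ih
  have htendsto : Filter.Tendsto (fun n => F^[n] d0) Filter.atTop (nhds dt) :=
    hcontr.tendsto_iterate_fixedPoint d0
  have htend : ∀ x y : S, Filter.Tendsto (fun n => F^[n] d0 x y) Filter.atTop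
      (nhds (dt x y)) := by
    intro x y
    have h1 := tendsto_pi_nhds.1 htendsto x
    exact tendsto_pi_nhds.1 h1 y
  have hdtp : IsPseudometric dt := by
    constructor
    · intro x y
      exact ge_of_tendsto' (htend x y) fun n => (hiter n).nonneg x y
    · intro x
      refine tendsto_nhds_unique (htend x x) ?_
      have : (fun n => F^[n] d0 x x) = fun _ => (0:ℝ) :=
        funext fun n => (hiter n).refl x
      rw [this]; exact tendsto_const_nhds
    · intro x y
      refine tendsto_nhds_unique (htend x y) ?_
      have : (fun n => F^[n] d0 x y) = fun n => F^[n] d0 y x :=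
        funext fun n => (hiter n).symm x y
      rw [this]; exact htend y x
    · intro x y z
      exact le_of_tendsto_of_tendsto' (htend x z) ((htend x y).add (htend y z))
        fun n => (hiter n).triangle x y z
  exact ⟨dt, hdtp, hfix, fun d _ hd => hcontr.fixedPoint_unique hd⟩
end

section
/- Let d̃ be the fixed point of F(d)(s_i,s_j) = (1−c)·|R^π_{s_i} − R^π_{s_j}| + c·W₁(d)(P^π_{s_i}, P^π_{s_j}) for a finite MDP with policy π and c ∈ [0,1). If γ ≤ c, then the value function V^π, defined as the unique fixed point of V^π(s) = R^π_s + γ·Σ_{s'} P^π(s'|s)·V^π(s'), is Lipschitz with respect to d̃ with constant 1/(1−c): |V^π(s_i) − V^π(s_j)| ≤ (1/(1−c))·d̃(s_i, s_j). -/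
open Finset

/-- if `γ ≤ c`, the value function `V^π` is Lipschitz with constant
`1/(1-c)` with respect to the π-bisimulation metric `d̃`. -/
theorem stmt_5 {S : Type*} [Fintype S]
    (R : S → ℝ) (P : S → S → ℝ) (hP : ∀ s, IsProb (P s))
    (γ c : ℝ) (hγ0 : 0 ≤ γ) (hγc : γ ≤ c) (hc1 : c < 1)
    (dt : S → S → ℝ) (hdt : IsPseudometric dt) (hfix : bisimF R P c dt = dt)
    (V : S → ℝ) (hV : ∀ s, V s = R s + γ * ∑ s', P s s' * V s') :
    ∀ s_i s_j, |V s_i - V s_j| ≤ (1 / (1 - c)) * dt s_i s_j := by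
  intro s_i s_j
  cases isEmpty_or_nonempty S with
  | inl h => exact (IsEmpty.false s_i).elim
  | inr h =>
    have hc0 : 0 ≤ c := le_trans hγ0 hγc
    have h1c : 0 < 1 - c := by linarith
    set K := 1 / (1 - c) with hKdef
    have hKpos : 0 < K := by positivity
    obtain ⟨p, -, hmax⟩ := Finset.exists_max_image (Finset.univ : Finset (S × S))
      (fun p => |V p.1 - V p.2| - K * dt p.1 p.2) ⟨(s_i, s_j), Finset.mem_univ _⟩
    obtain ⟨x, y⟩ := p
    set M := |V x - V y| - K * dt x y with hM
    have hmax' : ∀ a b : S, |V a - V b| - K * dt a b ≤ M := by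
      intro a b; exact hmax (a, b) (Finset.mem_univ _)
    suffices hM0 : M ≤ 0 by
      have := hmax' s_i s_j
      nlinarith
    -- The W1 set between P x and P y
    set Sxy := { r | ∃ g : S → S → ℝ, IsCoupling g (P x) (P y) ∧
        r = ∑ a, ∑ b, dt a b * g a b } with hSxy
    have hW1 : W1 dt (P x) (P y) = sInf Sxy := rfl
    -- product coupling gives nonemptiness
    have hne : Sxy.Nonempty := by
      refine ⟨∑ a, ∑ b, dt a b * (P x a * P y b), fun a b => P x a * P y b, ⟨?_, ?_, ?_⟩, rfl⟩
      · intro a b; exact mul_nonneg ((hP x).1 a) ((hP y).1 b)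
      · intro a; rw [← Finset.mul_sum, (hP y).2, mul_one]
      · intro b
        rw [show ∑ a, P x a * P y b = (∑ a, P x a) * P y b by rw [Finset.sum_mul],
          (hP x).2, one_mul]
    -- every element of Sxy is nonnegative
    have hSnn : ∀ r ∈ Sxy, (0:ℝ) ≤ r := by
      rintro r ⟨g, hg, rfl⟩
      exact Finset.sum_nonneg fun a _ => Finset.sum_nonneg fun b _ =>
        mul_nonneg (hdt.nonneg a b) (hg.1 a b)
    have hW1nn : 0 ≤ W1 dt (P x) (P y) := le_csInf hne (hSnn)
    set E := (∑ s', P x s' * V s') - (∑ s', P y s' * V s') with hE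
    -- key bound: |E| ≤ K * W1 + M
    have hkey : |E| ≤ K * W1 dt (P x) (P y) + M := by
      have hlb : ∀ r ∈ Sxy, (|E| - M) / K ≤ r := by
        rintro r ⟨g, hg, rfl⟩
        rw [div_le_iff₀ hKpos]
        have hid : E = ∑ a, ∑ b, (V a - V b) * g a b := by
          have h1 : ∑ a, ∑ b, (V a - V b) * g a b
              = (∑ a, ∑ b, V a * g a b) - (∑ a, ∑ b, V b * g a b) := by
            rw [← Finset.sum_sub_distrib]
            congr 1; ext a
            rw [← Finset.sum_sub_distrib]
            congr 1; ext b; ring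
          have h2 : (∑ a, ∑ b, V a * g a b) = ∑ a, P x a * V a := by
            congr 1; ext a
            rw [← Finset.mul_sum, hg.2.1 a, mul_comm]
          have h3 : (∑ a, ∑ b, V b * g a b) = ∑ b, P y b * V b := by
            rw [Finset.sum_comm]
            congr 1; ext b
            rw [← Finset.mul_sum, hg.2.2 b, mul_comm]
          rw [h1, h2, h3, hE]
        have hb : |E| ≤ ∑ a, ∑ b, (K * dt a b + M) * g a b := by
          rw [hid]
          calc |∑ a, ∑ b, (V a - V b) * g a b|
              ≤ ∑ a, |∑ b, (V a - V b) * g a b| := Finset.abs_sum_le_sum_abs _ _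
            _ ≤ ∑ a, ∑ b, |(V a - V b) * g a b| :=
                Finset.sum_le_sum fun a _ => Finset.abs_sum_le_sum_abs _ _
            _ ≤ ∑ a, ∑ b, (K * dt a b + M) * g a b := by
                refine Finset.sum_le_sum fun a _ => Finset.sum_le_sum fun b _ => ?_
                rw [abs_mul, abs_of_nonneg (hg.1 a b)]
                refine mul_le_mul_of_nonneg_right ?_ (hg.1 a b)
                have := hmax' a b; linarith
        have hsum1 : ∑ a, ∑ b, g a b = 1 := by
          calc ∑ a, ∑ b, g a b = ∑ a, P x a := by
                exact Finset.sum_congr rfl fun a _ => hg.2.1 a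
            _ = 1 := (hP x).2
        have hexp : ∑ a, ∑ b, (K * dt a b + M) * g a b
            = K * (∑ a, ∑ b, dt a b * g a b) + M := by
          have : ∑ a, ∑ b, (K * dt a b + M) * g a b
              = ∑ a, ∑ b, (K * (dt a b * g a b) + M * g a b) := by
            congr 1; ext a; congr 1; ext b; ring
          rw [this]
          simp only [Finset.sum_add_distrib, ← Finset.mul_sum]
          rw [hsum1]; ring
        rw [hexp] at hb
        nlinarith [hb]
      have : (|E| - M) / K ≤ sInf Sxy := le_csInf hne hlb
      rw [div_le_iff₀ hKpos] at this
      rw [hW1]; nlinarith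
    -- fixed point equation at (x,y)
    have hfixxy : dt x y = (1 - c) * |R x - R y| + c * W1 dt (P x) (P y) := by
      conv_lhs => rw [← hfix]
      rfl
    -- value equation
    have hVdiff : V x - V y = (R x - R y) + γ * E := by
      rw [hV x, hV y, hE]; ring
    have habs : |V x - V y| ≤ |R x - R y| + γ * (K * W1 dt (P x) (P y) + M) := by
      calc |V x - V y| = |(R x - R y) + γ * E| := by rw [hVdiff]
        _ ≤ |R x - R y| + |γ * E| := abs_add_le _ _
        _ = |R x - R y| + γ * |E| := by rw [abs_mul, abs_of_nonneg hγ0]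
        _ ≤ |R x - R y| + γ * (K * W1 dt (P x) (P y) + M) := by
            have := mul_le_mul_of_nonneg_left hkey hγ0; linarith
    have hK1c : K * (1 - c) = 1 := by
      rw [hKdef]; field_simp
    have hγ1 : γ < 1 := lt_of_le_of_lt hγc hc1
    have hKdt : K * dt x y = |R x - R y| + c * (K * W1 dt (P x) (P y)) := by
      calc K * dt x y = (K * (1 - c)) * |R x - R y| + c * (K * W1 dt (P x) (P y)) := by
            rw [hfixxy]; ring
        _ = |R x - R y| + c * (K * W1 dt (P x) (P y)) := by rw [hK1c]; ring
    have hγcW : γ * (K * W1 dt (P x) (P y)) ≤ c * (K * W1 dt (P x) (P y)) :=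
      mul_le_mul_of_nonneg_right hγc (mul_nonneg hKpos.le hW1nn)
    nlinarith [habs, hKdt, hγcW]
end

section
/- Given an MDP M̄ constructed by aggregating states of a finite MDP M into clusters of d̃-diameter at most 2ε (where d̃ is the π*-bisimulation metric with parameter c ∈ [γ,1)), and an encoder φ mapping states of M to clusters, the optimal value functions satisfy |V*(s) − V̄*(φ(s))| ≤ 2ε/((1−γ)(1−c)) for every state s. -/
open Finset

section aux
variable {S : Type*} [Fintype S]

lemma W1set_nonempty (d : S → S → ℝ) {p q : S → ℝ} (hp : IsProb p) (hq : IsProb q) :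
    {r | ∃ γ : S → S → ℝ, IsCoupling γ p q ∧ r = ∑ x, ∑ y, d x y * γ x y}.Nonempty := by
  refine ⟨_, fun x y => p x * q y, ⟨fun x y => mul_nonneg (hp.1 x) (hq.1 y), ?_, ?_⟩, rfl⟩
  · intro x; rw [← Finset.mul_sum, hq.2, mul_one]
  · intro y; rw [← Finset.sum_mul, hp.2, one_mul]

/-- Kantorovich-style bound: if `h` is Lipschitz with slack `K` w.r.t. `d`
(scaled by `a ≥ 0`), then expectations differ by at most `W1 d p q + K`. -/
lemma exp_diff_le {d : S → S → ℝ} {h : S → ℝ} {a K : ℝ} (ha : 0 ≤ a)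
    (hh : ∀ x y, a * |h x - h y| ≤ d x y + K) {p q : S → ℝ}
    (hp : IsProb p) (hq : IsProb q) :
    a * |∑ x, p x * h x - ∑ y, q y * h y| ≤ W1 d p q + K := by
  rw [← sub_le_iff_le_add]
  refine le_csInf (W1set_nonempty d hp hq) ?_
  rintro r ⟨γ, hγ, rfl⟩
  rw [sub_le_iff_le_add]
  have hmass : ∑ x, ∑ y, γ x y = 1 := by
    have := hγ.2.1
    simp only [this]; exact hp.2
  have h1 : ∑ x, p x * h x = ∑ x, ∑ y, γ x y * h x := by
    refine Finset.sum_congr rfl fun x _ => ?_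
    rw [← hγ.2.1 x, Finset.sum_mul]
  have h2 : ∑ y, q y * h y = ∑ x, ∑ y, γ x y * h y := by
    rw [Finset.sum_comm]
    refine Finset.sum_congr rfl fun y _ => ?_
    rw [← hγ.2.2 y, Finset.sum_mul]
  have hdiff : ∑ x, p x * h x - ∑ y, q y * h y
      = ∑ x, ∑ y, γ x y * (h x - h y) := by
    rw [h1, h2, ← Finset.sum_sub_distrib]
    refine Finset.sum_congr rfl fun x _ => ?_
    rw [← Finset.sum_sub_distrib]
    refine Finset.sum_congr rfl fun y _ => ?_
    ring
  calc a * |∑ x, p x * h x - ∑ y, q y * h y|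
      ≤ a * ∑ x, ∑ y, γ x y * |h x - h y| := by
        refine mul_le_mul_of_nonneg_left ?_ ha
        rw [hdiff]
        refine (Finset.abs_sum_le_sum_abs _ _).trans ?_
        refine Finset.sum_le_sum fun x _ => ?_
        refine (Finset.abs_sum_le_sum_abs _ _).trans ?_
        refine Finset.sum_le_sum fun y _ => ?_
        rw [abs_mul, abs_of_nonneg (hγ.1 x y)]
    _ = ∑ x, ∑ y, γ x y * (a * |h x - h y|) := by
        rw [Finset.mul_sum]
        refine Finset.sum_congr rfl fun x _ => ?_
        rw [Finset.mul_sum]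
        refine Finset.sum_congr rfl fun y _ => ?_
        ring
    _ ≤ ∑ x, ∑ y, γ x y * (d x y + K) := by
        refine Finset.sum_le_sum fun x _ => Finset.sum_le_sum fun y _ => ?_
        exact mul_le_mul_of_nonneg_left (hh x y) (hγ.1 x y)
    _ = (∑ x, ∑ y, d x y * γ x y) + K := by
        have : ∑ x, ∑ y, γ x y * (d x y + K)
            = ∑ x, ∑ y, (d x y * γ x y + γ x y * K) := by
          refine Finset.sum_congr rfl fun x _ => Finset.sum_congr rfl fun y _ => ?_
          ring
        rw [this]
        simp only [Finset.sum_add_distrib, ← Finset.sum_mul, hmass]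
        ring

lemma ciSup_sub_ciSup_le {A : Type*} [Fintype A] [Nonempty A] (f g : A → ℝ) :
    (⨆ a, f a) - (⨆ a, g a) ≤ ⨆ a, (f a - g a) := by
  rw [sub_le_iff_le_add]
  refine ciSup_le fun a => ?_
  have h1 : f a - g a ≤ ⨆ a, (f a - g a) :=
    le_ciSup (Set.Finite.bddAbove (Set.finite_range fun a => f a - g a)) a
  have h2 : g a ≤ ⨆ a, g a :=
    le_ciSup (Set.Finite.bddAbove (Set.finite_range g)) a
  linarith

end aux

lemma lipschitz_V {S A : Type*} [Fintype S] [Fintype A] [Nonempty A] [Nonempty S]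
    (R : S → A → ℝ) (P : S → A → S → ℝ) (hP : ∀ s a, IsProb (P s a))
    (γ c : ℝ) (hγ0 : 0 ≤ γ) (hγc : γ ≤ c) (hc1 : c < 1)
    (dt : S → S → ℝ) (hdnn : ∀ x y, 0 ≤ dt x y) (hsymm : ∀ x y, dt x y = dt y x)
    (hfix : bisimFA R P c dt = dt)
    (V : S → ℝ) (hV : ∀ s, V s = ⨆ a : A, (R s a + γ * ∑ s', P s a s' * V s')) :
    ∀ x y, (1 - c) * |V x - V y| ≤ dt x y := by
  have hc : (0:ℝ) < 1 - c := by linarith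
  obtain ⟨⟨x0, y0⟩, hmax⟩ := Finite.exists_max
    (fun p : S × S => (1 - c) * |V p.1 - V p.2| - dt p.1 p.2)
  set K : ℝ := (1 - c) * |V x0 - V y0| - dt x0 y0 with hK
  have hub : ∀ x y, (1 - c) * |V x - V y| ≤ dt x y + K := by
    intro x y
    have := hmax (x, y)
    simpa using by linarith [hmax (x, y)]
  -- key one-sided bound
  have key : ∀ x y : S, (1 - c) * (V x - V y) ≤ dt x y + γ * K := by
    intro x y
    have hdxy : dt x y = ⨆ a : A,
        ((1 - c) * |R x a - R y a| + c * W1 dt (P x a) (P y a)) := by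
      conv_lhs => rw [← hfix]
      rfl
    have hstep : ∀ a : A,
        (R x a + γ * ∑ s', P x a s' * V s') - (R y a + γ * ∑ s', P y a s' * V s')
          ≤ (dt x y + γ * K) / (1 - c) := by
      intro a
      rw [le_div_iff₀ hc]
      have hW : (1 - c) * |(∑ s', P x a s' * V s') - (∑ s', P y a s' * V s')|
          ≤ W1 dt (P x a) (P y a) + K :=
        exp_diff_le (le_of_lt hc) hub (hP x a) (hP y a)
      have hWnn : 0 ≤ W1 dt (P x a) (P y a) := W1_nonneg hdnn (hP x a) (hP y a)
      have hterm : (1 - c) * |R x a - R y a| + c * W1 dt (P x a) (P y a) ≤ dt x y := by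
        rw [hdxy]
        exact le_ciSup (Set.Finite.bddAbove (Set.finite_range
          (fun a : A => (1 - c) * |R x a - R y a| + c * W1 dt (P x a) (P y a)))) a
      have h1 : (1 - c) * (R x a - R y a) ≤ (1 - c) * |R x a - R y a| :=
        mul_le_mul_of_nonneg_left (le_abs_self _) (le_of_lt hc)
      have h2 : (1 - c) * (γ * ((∑ s', P x a s' * V s') - (∑ s', P y a s' * V s')))
          ≤ γ * (W1 dt (P x a) (P y a) + K) := by
        calc (1 - c) * (γ * ((∑ s', P x a s' * V s') - (∑ s', P y a s' * V s')))
            = γ * ((1 - c) * ((∑ s', P x a s' * V s') - (∑ s', P y a s' * V s'))) := by ring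
          _ ≤ γ * ((1 - c) * |(∑ s', P x a s' * V s') - (∑ s', P y a s' * V s')|) := by
              refine mul_le_mul_of_nonneg_left ?_ hγ0
              exact mul_le_mul_of_nonneg_left (le_abs_self _) (le_of_lt hc)
          _ ≤ γ * (W1 dt (P x a) (P y a) + K) := mul_le_mul_of_nonneg_left hW hγ0
      have h3 : γ * W1 dt (P x a) (P y a) ≤ c * W1 dt (P x a) (P y a) :=
        mul_le_mul_of_nonneg_right hγc hWnn
      nlinarith [h1, h2, h3, hterm]
    have hVx : V x - V y ≤ (dt x y + γ * K) / (1 - c) := by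
      rw [hV x, hV y]
      refine (ciSup_sub_ciSup_le _ _).trans (ciSup_le hstep)
    calc (1 - c) * (V x - V y) ≤ (1 - c) * ((dt x y + γ * K) / (1 - c)) :=
          mul_le_mul_of_nonneg_left hVx (le_of_lt hc)
      _ = dt x y + γ * K := by field_simp
  have hγ1 : γ < 1 := lt_of_le_of_lt hγc hc1
  have hK0 : K ≤ 0 := by
    have h1 := key x0 y0
    have h2 := key y0 x0
    rw [hsymm y0 x0] at h2
    have habs : (1 - c) * |V x0 - V y0| ≤ dt x0 y0 + γ * K := by
      rcases le_or_gt (V x0 - V y0) 0 with h | h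
      · rw [abs_of_nonpos h]; nlinarith [h2]
      · rw [abs_of_pos h]; nlinarith [h1]
    have hKle : K ≤ γ * K := by linarith [habs]
    by_contra hpos
    push_neg at hpos
    nlinarith [mul_lt_mul_of_pos_right hγ1 hpos]
  intro x y
  linarith [hub x y, hK0]


/-- value bound for the ε-aggregated MDP: the optimal value functions of
the original MDP and of the aggregated MDP (rewards and transitions averaged over
clusters of bisimulation diameter at most 2ε) differ by at most `2ε/((1-γ)(1-c))`. -/
theorem stmt_8 {S Z A : Type*} [Fintype S] [Fintype Z] [Fintype A] [Nonempty A]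
    [DecidableEq Z]
    (R : S → A → ℝ) (P : S → A → S → ℝ) (hP : ∀ s a, IsProb (P s a))
    (γ c ε : ℝ) (hγ0 : 0 ≤ γ) (hγc : γ ≤ c) (hc1 : c < 1) (hε : 0 < ε)
    (dt : S → S → ℝ) (hdt : IsPseudometric dt) (hfix : bisimFA R P c dt = dt)
    (φ : S → Z) (hφ : Function.Surjective φ)
    (hdiam : ∀ s_i s_j, φ s_i = φ s_j → dt s_i s_j ≤ 2 * ε)
    (Rbar : Z → A → ℝ)
    (hRbar : ∀ z a, Rbar z a =
      (∑ s ∈ univ.filter (fun s => φ s = z), R s a) /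
        (univ.filter (fun s => φ s = z)).card)
    (Pbar : Z → A → Z → ℝ)
    (hPbar : ∀ z a z', Pbar z a z' =
      (∑ s ∈ univ.filter (fun s => φ s = z),
        ∑ s' ∈ univ.filter (fun s' => φ s' = z'), P s a s') /
        (univ.filter (fun s => φ s = z)).card)
    (V : S → ℝ) (hV : ∀ s, V s = ⨆ a : A, (R s a + γ * ∑ s', P s a s' * V s'))
    (Vbar : Z → ℝ)
    (hVbar : ∀ z, Vbar z = ⨆ a : A, (Rbar z a + γ * ∑ z', Pbar z a z' * Vbar z')) :
    ∀ s, |V s - Vbar (φ s)| ≤ 2 * ε / ((1 - γ) * (1 - c)) := by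
  intro s
  have hne : Nonempty S := ⟨s⟩
  have hc : (0:ℝ) < 1 - c := by linarith
  have hγ1 : γ < 1 := lt_of_le_of_lt hγc hc1
  have hγ' : (0:ℝ) < 1 - γ := by linarith
  have hLip : ∀ x y, (1 - c) * |V x - V y| ≤ dt x y :=
    lipschitz_V R P hP γ c hγ0 hγc hc1 dt hdt.nonneg hdt.symm hfix V hV
  set C : Z → Finset S := fun z => univ.filter (fun u => φ u = z) with hC
  have hCmem : ∀ (u : S) z, u ∈ C z ↔ φ u = z := by
    intro u z; simp [hC]
  have hCpos : ∀ z, 0 < (C z).card := by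
    intro z
    obtain ⟨u, hu⟩ := hφ z
    exact Finset.card_pos.mpr ⟨u, (hCmem u z).mpr hu⟩
  have hCposR : ∀ z, (0:ℝ) < ((C z).card : ℝ) := fun z => by exact_mod_cast hCpos z
  -- averaged Bellman identity
  have hId : ∀ z a, Rbar z a + γ * ∑ z', Pbar z a z' * Vbar z'
      = (∑ u ∈ C z, (R u a + γ * ∑ s', P u a s' * Vbar (φ s'))) / (C z).card := by
    intro z a
    have hPsum : ∑ z', Pbar z a z' * Vbar z'
        = (∑ u ∈ C z, ∑ s', P u a s' * Vbar (φ s')) / (C z).card := by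
      have h1 : ∀ z', Pbar z a z' * Vbar z'
          = (∑ u ∈ C z, ∑ s' ∈ C z', P u a s' * Vbar (φ s')) / (C z).card := by
        intro z'
        rw [hPbar]
        rw [div_mul_eq_mul_div, Finset.sum_mul]
        congr 1
        refine Finset.sum_congr rfl fun u _ => ?_
        rw [Finset.sum_mul]
        refine Finset.sum_congr rfl fun s' hs' => ?_
        rw [(hCmem s' z').mp hs']
      rw [Finset.sum_congr rfl fun z' _ => h1 z', ← Finset.sum_div]
      congr 1
      rw [Finset.sum_comm]
      refine Finset.sum_congr rfl fun u _ => ?_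
      exact Finset.sum_fiberwise _ _ _
    rw [hRbar, hPsum, ← mul_div_assoc, ← add_div]
    congr 1
    rw [Finset.mul_sum, ← Finset.sum_add_distrib]
  have hVbar' : ∀ z, Vbar z = ⨆ a : A,
      (∑ u ∈ C z, (R u a + γ * ∑ s', P u a s' * Vbar (φ s'))) / (C z).card :=
    fun z => (hVbar z).trans (iSup_congr (hId z))
  -- the maximal gap
  obtain ⟨s0, hs0⟩ := Finite.exists_max (fun u : S => |V u - Vbar (φ u)|)
  set D : ℝ := |V s0 - Vbar (φ s0)| with hD
  have hDnn : 0 ≤ D := abs_nonneg _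
  -- core per-pair bound
  have core : ∀ (a : A) (u : S), φ u = φ s0 →
      (1 - c) * |(R s0 a - R u a)
        + γ * ((∑ s', P s0 a s' * V s') - ∑ s', P u a s' * V s')| ≤ 2 * ε := by
    intro a u hu
    have hW : (1 - c) * |(∑ s', P s0 a s' * V s') - (∑ s', P u a s' * V s')|
        ≤ W1 dt (P s0 a) (P u a) + 0 := by
      refine exp_diff_le (le_of_lt hc) (fun x y => ?_) (hP s0 a) (hP u a)
      rw [add_zero]; exact hLip x y
    rw [add_zero] at hW
    have hWnn : 0 ≤ W1 dt (P s0 a) (P u a) := W1_nonneg hdt.nonneg (hP s0 a) (hP u a)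
    have hterm : (1 - c) * |R s0 a - R u a| + c * W1 dt (P s0 a) (P u a) ≤ dt s0 u := by
      have hdxy : dt s0 u = ⨆ a : A,
          ((1 - c) * |R s0 a - R u a| + c * W1 dt (P s0 a) (P u a)) := by
        conv_lhs => rw [← hfix]
        rfl
      rw [hdxy]
      exact le_ciSup (Set.Finite.bddAbove (Set.finite_range
        (fun a : A => (1 - c) * |R s0 a - R u a| + c * W1 dt (P s0 a) (P u a)))) a
    have hd2 : dt s0 u ≤ 2 * ε := hdiam s0 u hu.symm
    have h3 : γ * W1 dt (P s0 a) (P u a) ≤ c * W1 dt (P s0 a) (P u a) :=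
      mul_le_mul_of_nonneg_right hγc hWnn
    have habs : |(R s0 a - R u a)
          + γ * ((∑ s', P s0 a s' * V s') - ∑ s', P u a s' * V s')|
        ≤ |R s0 a - R u a|
          + γ * |(∑ s', P s0 a s' * V s') - ∑ s', P u a s' * V s'| := by
      refine (abs_add_le _ _).trans ?_
      rw [abs_mul, abs_of_nonneg hγ0]
    nlinarith [mul_le_mul_of_nonneg_left habs (le_of_lt hc),
      mul_le_mul_of_nonneg_left hW hγ0]
  -- expectation of the gap
  have hEf : ∀ (a : A) (u : S), |∑ s', P u a s' * (V s' - Vbar (φ s'))| ≤ D := by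
    intro a u
    have h1 : |∑ s', P u a s' * (V s' - Vbar (φ s'))|
        ≤ ∑ s', P u a s' * D := by
      refine (Finset.abs_sum_le_sum_abs _ _).trans (Finset.sum_le_sum fun s' _ => ?_)
      rw [abs_mul, abs_of_nonneg ((hP u a).1 s')]
      exact mul_le_mul_of_nonneg_left (hs0 s') ((hP u a).1 s')
    rwa [← Finset.sum_mul, (hP u a).2, one_mul] at h1
  have hsplit : ∀ (a : A) (u : S), ∑ s', P u a s' * Vbar (φ s')
      = (∑ s', P u a s' * V s') - ∑ s', P u a s' * (V s' - Vbar (φ s')) := by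
    intro a u
    rw [← Finset.sum_sub_distrib]
    exact Finset.sum_congr rfl fun s' _ => by ring
  -- per-(a,u) bounds in both directions
  have bnd1 : ∀ (a : A) (u : S), φ u = φ s0 →
      (R s0 a + γ * ∑ s', P s0 a s' * V s')
        - (R u a + γ * ∑ s', P u a s' * Vbar (φ s'))
        ≤ 2 * ε / (1 - c) + γ * D := by
    intro a u hu
    have hcore := core a u hu
    have hA : (R s0 a - R u a)
        + γ * ((∑ s', P s0 a s' * V s') - ∑ s', P u a s' * V s')
        ≤ 2 * ε / (1 - c) := by
      rw [le_div_iff₀ hc]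
      nlinarith [le_abs_self ((R s0 a - R u a)
        + γ * ((∑ s', P s0 a s' * V s') - ∑ s', P u a s' * V s'))]
    have hE := hEf a u
    have hE1 : γ * ∑ s', P u a s' * (V s' - Vbar (φ s')) ≤ γ * D :=
      mul_le_mul_of_nonneg_left ((le_abs_self _).trans hE) hγ0
    rw [hsplit a u]
    linarith
  have bnd2 : ∀ (a : A) (u : S), φ u = φ s0 →
      (R u a + γ * ∑ s', P u a s' * Vbar (φ s'))
        - (R s0 a + γ * ∑ s', P s0 a s' * V s')
        ≤ 2 * ε / (1 - c) + γ * D := by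
    intro a u hu
    have hcore := core a u hu
    have hA : -((R s0 a - R u a)
        + γ * ((∑ s', P s0 a s' * V s') - ∑ s', P u a s' * V s'))
        ≤ 2 * ε / (1 - c) := by
      rw [le_div_iff₀ hc]
      nlinarith [neg_abs_le ((R s0 a - R u a)
        + γ * ((∑ s', P s0 a s' * V s') - ∑ s', P u a s' * V s'))]
    have hE := hEf a u
    have hE1 : γ * ∑ s', P u a s' * (V s' - Vbar (φ s')) ≥ γ * (-D) :=
      mul_le_mul_of_nonneg_left ((neg_abs_le _).trans' (by linarith [hEf a u])) hγ0
    rw [hsplit a u]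
    nlinarith [hE1]
  -- direction 1
  have dir1 : V s0 - Vbar (φ s0) ≤ 2 * ε / (1 - c) + γ * D := by
    rw [hV s0, hVbar' (φ s0)]
    refine (ciSup_sub_ciSup_le _ _).trans (ciSup_le fun a => ?_)
    rw [sub_le_iff_le_add]
    rw [← sub_le_iff_le_add']
    rw [le_div_iff₀ (hCposR (φ s0))]
    have := Finset.card_nsmul_le_sum (C (φ s0))
      (fun u => R u a + γ * ∑ s', P u a s' * Vbar (φ s'))
      ((R s0 a + γ * ∑ s', P s0 a s' * V s') - (2 * ε / (1 - c) + γ * D))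
      (fun u hu => by
        have := bnd1 a u ((hCmem u (φ s0)).mp hu)
        linarith)
    rw [nsmul_eq_mul] at this
    linarith [this]
  -- direction 2
  have dir2 : Vbar (φ s0) - V s0 ≤ 2 * ε / (1 - c) + γ * D := by
    rw [hV s0, hVbar' (φ s0)]
    refine (ciSup_sub_ciSup_le _ _).trans (ciSup_le fun a => ?_)
    rw [sub_le_iff_le_add]
    rw [div_le_iff₀ (hCposR (φ s0))]
    have := Finset.sum_le_card_nsmul (C (φ s0))
      (fun u => R u a + γ * ∑ s', P u a s' * Vbar (φ s'))
      ((R s0 a + γ * ∑ s', P s0 a s' * V s') + (2 * ε / (1 - c) + γ * D))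
      (fun u hu => by
        have := bnd2 a u ((hCmem u (φ s0)).mp hu)
        linarith)
    rw [nsmul_eq_mul] at this
    nlinarith [this, hCposR (φ s0)]
  -- combine
  have hDle : D ≤ 2 * ε / (1 - c) + γ * D := by
    rcases abs_choice (V s0 - Vbar (φ s0)) with h | h
    · have h' : D = V s0 - Vbar (φ s0) := hD.trans h
      linarith [dir1]
    · have h' : D = -(V s0 - Vbar (φ s0)) := hD.trans h
      linarith [dir2]
  have h2e : (D - γ * D) * (1 - c) ≤ 2 * ε := by
    rw [← le_div_iff₀ hc]; linarith
  have hfinal : D ≤ 2 * ε / ((1 - γ) * (1 - c)) := by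
    rw [le_div_iff₀ (mul_pos hγ' hc)]
    have : D * ((1 - γ) * (1 - c)) = (D - γ * D) * (1 - c) := by ring
    linarith [this, h2e]
  exact (hs0 s).trans hfinal
end

section
/- In a finite MDP, let B be a bisimulation relation (states s_i ≡_B s_j satisfy R(s_i,a) = R(s_j,a) and P(G|s_i,a) = P(G|s_j,a) for all actions a and all equivalence classes G). Then any two bisimilar states have the same optimal value: s_i ≡_B s_j implies V*(s_i) = V*(s_j). -/
open Finset

/-- bisimilar states (under a bisimulation relation `B`) have the same
optimal value. -/
theorem stmt_12 {S A : Type*} [Fintype S] [Fintype A] [Nonempty A]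
    (R : S → A → ℝ) (P : S → A → S → ℝ) (hP : ∀ s a, IsProb (P s a))
    (γ : ℝ) (hγ0 : 0 ≤ γ) (hγ1 : γ < 1)
    (B : S → S → Prop) [DecidableRel B] (hB : Equivalence B)
    (hR : ∀ s_i s_j, B s_i s_j → ∀ a, R s_i a = R s_j a)
    (hPB : ∀ s_i s_j, B s_i s_j → ∀ a z,
      ∑ s' ∈ univ.filter (fun s' => B z s'), P s_i a s' =
        ∑ s' ∈ univ.filter (fun s' => B z s'), P s_j a s')
    (V : S → ℝ) (hV : ∀ s, V s = ⨆ a : A, (R s a + γ * ∑ s', P s a s' * V s')) :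
    ∀ s_i s_j, B s_i s_j → V s_i = V s_j := by
  intro s_i s_j hij
  classical
  set T : Finset (S × S) := univ.filter (fun p => B p.1 p.2) with hT
  have hmemT : ∀ x y, B x y → (x, y) ∈ T := by
    intro x y h; simp [hT, h]
  have hne : T.Nonempty := ⟨(s_i, s_j), hmemT _ _ hij⟩
  set D : ℝ := T.sup' hne (fun p => V p.1 - V p.2) with hD
  have hDmem : ∀ x y, B x y → V x - V y ≤ D := by
    intro x y h
    exact Finset.le_sup' (f := fun p : S × S => V p.1 - V p.2) (hmemT x y h)
  have hD0 : 0 ≤ D := by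
    have := hDmem s_i s_i (hB.refl s_i)
    linarith
  -- setoid and quotient
  let sd : Setoid S := ⟨B, hB⟩
  haveI : DecidableEq (Quotient sd) := fun a b =>
    Quotient.recOnSubsingleton₂ a b fun x y =>
      decidable_of_iff (B x y) (Quotient.eq'' (s₁ := sd)).symm
  -- class-constant functions have equal expectations
  have hsum_const : ∀ x y, B x y → ∀ (F : S → ℝ), (∀ u v, B u v → F u = F v) → ∀ a,
      ∑ s', P x a s' * F s' = ∑ s', P y a s' * F s' := by
    intro x y hxy F hF a
    have h1 := Finset.sum_fiberwise (univ : Finset S) (fun s' => (Quotient.mk sd s'))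
      (fun s' => P x a s' * F s')
    have h2 := Finset.sum_fiberwise (univ : Finset S) (fun s' => (Quotient.mk sd s'))
      (fun s' => P y a s' * F s')
    rw [← h1, ← h2]
    refine Finset.sum_congr rfl fun c _ => ?_
    induction c using Quotient.ind with
    | _ z =>
      have hfil : (univ.filter (fun s' => Quotient.mk sd s' = Quotient.mk sd z))
          = univ.filter (fun s' => B z s') := by
        apply Finset.filter_congr
        intro s' _
        simp only [Quotient.eq]
        exact ⟨fun h => hB.symm h, fun h => hB.symm h⟩
      rw [hfil]
      have hFz : ∀ s' ∈ univ.filter (fun s' => B z s'), F s' = F z := by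
        intro s' hs'
        exact hF s' z (hB.symm (Finset.mem_filter.mp hs').2)
      calc ∑ s' ∈ univ.filter (fun s' => B z s'), P x a s' * F s'
          = ∑ s' ∈ univ.filter (fun s' => B z s'), P x a s' * F z :=
            Finset.sum_congr rfl fun s' hs' => by rw [hFz s' hs']
        _ = (∑ s' ∈ univ.filter (fun s' => B z s'), P x a s') * F z := by
            rw [Finset.sum_mul]
        _ = (∑ s' ∈ univ.filter (fun s' => B z s'), P y a s') * F z := by
            rw [hPB x y hxy a z]
        _ = ∑ s' ∈ univ.filter (fun s' => B z s'), P y a s' * F z := by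
            rw [Finset.sum_mul]
        _ = ∑ s' ∈ univ.filter (fun s' => B z s'), P y a s' * F s' :=
            Finset.sum_congr rfl fun s' hs' => by rw [hFz s' hs']
  -- class max function
  have hclsne : ∀ z : S, z ∈ univ.filter (fun s' => B z s') := by
    intro z; simp [hB.refl z]
  set M : S → ℝ := fun z => (univ.filter (fun s' => B z s')).sup' ⟨z, hclsne z⟩ V with hM
  have hVM : ∀ s', V s' ≤ M s' := fun s' => Finset.le_sup' V (hclsne s')
  have hMconst : ∀ x y, B x y → M x = M y := by
    intro x y h
    have : (univ.filter (fun s' => B x s')) = (univ.filter (fun s' => B y s')) := by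
      apply Finset.filter_congr
      intro s' _
      exact ⟨fun h' => hB.trans (hB.symm h) h', fun h' => hB.trans h h'⟩
    simp only [hM]
    congr 1
  have hMVD : ∀ s', M s' ≤ V s' + D := by
    intro s'
    apply Finset.sup'_le
    intro s'' hs''
    have hb : B s'' s' := hB.symm (Finset.mem_filter.mp hs'').2
    have := hDmem s'' s' hb
    linarith
  -- key expectation bound
  have hkey : ∀ x y, B x y → ∀ a,
      ∑ s', P x a s' * V s' - ∑ s', P y a s' * V s' ≤ D := by
    intro x y hxy a
    have h1 : ∑ s', P x a s' * V s' ≤ ∑ s', P x a s' * M s' :=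
      Finset.sum_le_sum fun s' _ =>
        mul_le_mul_of_nonneg_left (hVM s') ((hP x a).1 s')
    have h2 : ∑ s', P x a s' * M s' = ∑ s', P y a s' * M s' :=
      hsum_const x y hxy M hMconst a
    have h3 : ∑ s', P y a s' * M s' ≤ ∑ s', P y a s' * (V s' + D) :=
      Finset.sum_le_sum fun s' _ =>
        mul_le_mul_of_nonneg_left (hMVD s') ((hP y a).1 s')
    have h4 : ∑ s', P y a s' * (V s' + D) = (∑ s', P y a s' * V s') + D := by
      have := (hP y a).2
      rw [Finset.sum_congr rfl (fun s' _ => mul_add (P y a s') (V s') D),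
        Finset.sum_add_distrib, ← Finset.sum_mul, this, one_mul]
    linarith
  -- contraction step: for every B-pair, V x - V y ≤ γ * D
  have hstep : ∀ x y, B x y → V x - V y ≤ γ * D := by
    intro x y hxy
    have hbdd : ∀ s : S, BddAbove (Set.range fun a : A =>
        R s a + γ * ∑ s', P s a s' * V s') := fun s =>
      (Set.finite_range _).bddAbove
    rw [hV x, hV y, sub_le_iff_le_add]
    apply ciSup_le
    intro a
    have hkxy : ∑ s', P x a s' * V s' - ∑ s', P y a s' * V s' ≤ D :=
      hkey x y hxy a
    have hRa : R x a = R y a := hR x y hxy a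
    have hle : R x a + γ * ∑ s', P x a s' * V s'
        ≤ γ * D + (R y a + γ * ∑ s', P y a s' * V s') := by
      nlinarith [mul_le_mul_of_nonneg_left hkxy hγ0]
    exact hle.trans (by
      have := le_ciSup (hbdd y) a
      linarith)
  -- conclude D ≤ γ D hence D ≤ 0
  have hDle : D ≤ γ * D := by
    apply Finset.sup'_le
    intro p hp
    have : B p.1 p.2 := by
      have := Finset.mem_filter.mp hp
      exact this.2
    exact hstep p.1 p.2 this
  have hDzero : D ≤ 0 := by nlinarith
  have h1 := hstep s_i s_j hij
  have h2 := hstep s_j s_i (hB.symm hij)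
  nlinarith
end

section
/- Consider a finite MDP where the state factorizes as S = S¹ × S² and suppose: (i) the reward R depends only on the S¹-component, R(s¹,s²) = r(s¹); and (ii) transitions factorize with the S¹-component's dynamics independent of S², i.e., P((s¹',s²')|(s¹,s²),a) = P₁(s¹'|s¹,a)·P₂(s²'|s¹,s²,a). Then any two states sharing the same S¹-component have bisimulation distance zero: d̃((s¹,s²_i),(s¹,s²_j)) = 0, where d̃ is the fixed point of F(d)(x,y) = max_a [(1−c)|R(x)−R(y)| + c·W₁(d)(P_x^a, P_y^a)], c ∈ [0,1). -/
open Finset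

/-- in a factored MDP where the reward depends only on the first factor
and the first factor's dynamics are independent of the second, states sharing the same
first component have bisimulation distance zero. -/
theorem stmt_16 {S₁ S₂ A : Type*} [Fintype S₁] [Fintype S₂] [Fintype A] [Nonempty A]
    (R : S₁ × S₂ → ℝ) (r : S₁ → ℝ) (hR : ∀ s, R s = r s.1)
    (P : S₁ × S₂ → A → S₁ × S₂ → ℝ) (hP : ∀ s a, IsProb (P s a))
    (P₁ : S₁ → A → S₁ → ℝ) (hP₁ : ∀ s a, IsProb (P₁ s a))
    (P₂ : S₁ × S₂ → A → S₂ → ℝ) (hP₂ : ∀ s a, IsProb (P₂ s a))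
    (hfact : ∀ s a t, P s a t = P₁ s.1 a t.1 * P₂ s a t.2)
    (c : ℝ) (hc0 : 0 ≤ c) (hc1 : c < 1)
    (dt : S₁ × S₂ → S₁ × S₂ → ℝ) (hdt : IsPseudometric dt)
    (hfix : bisimFA (fun s (_ : A) => R s) P c dt = dt) :
    ∀ (s₁ : S₁) (s₂_i s₂_j : S₂), dt (s₁, s₂_i) (s₁, s₂_j) = 0 := by
  intro s₁ si sj
  classical
  have key : ∀ (M : ℝ), (∀ (u : S₁) (v w : S₂), dt (u, v) (u, w) ≤ M) →
      ∀ (x y : S₁ × S₂), x.1 = y.1 → dt x y ≤ c * M := by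
    intro M hM x y hxy
    conv_lhs => rw [← hfix]
    simp only [bisimFA]
    apply ciSup_le
    intro a
    have hRxy : R x = R y := by rw [hR, hR, hxy]
    rw [hRxy, sub_self, abs_zero, mul_zero, zero_add]
    refine mul_le_mul_of_nonneg_left ?_ hc0
    set γ : S₁ × S₂ → S₁ × S₂ → ℝ := fun t t' =>
      if t.1 = t'.1 then P₁ x.1 a t.1 * P₂ x a t.2 * P₂ y a t'.2 else 0 with hγ
    have hγnn : ∀ t t', 0 ≤ γ t t' := by
      intro t t'
      simp only [hγ]
      split
      · exact mul_nonneg (mul_nonneg ((hP₁ x.1 a).1 _) ((hP₂ x a).1 _)) ((hP₂ y a).1 _)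
      · exact le_rfl
    have hm1 : ∀ t, ∑ t', γ t t' = P x a t := by
      intro t
      rw [Fintype.sum_prod_type]
      have hin : ∀ t₁' : S₁, ∑ t₂' : S₂, γ t (t₁', t₂') =
          if t.1 = t₁' then P₁ x.1 a t.1 * P₂ x a t.2 else 0 := by
        intro t₁'
        simp only [hγ]
        by_cases h : t.1 = t₁'
        · simp only [h, if_true, ← Finset.mul_sum, (hP₂ y a).2, mul_one]
        · simp [h]
      simp only [hin, Finset.sum_ite_eq, Finset.mem_univ, if_pos, hfact x a t]
    have hm2 : ∀ t', ∑ t, γ t t' = P y a t' := by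
      intro t'
      rw [Fintype.sum_prod_type]
      have hin : ∀ t₁ : S₁, ∑ t₂ : S₂, γ (t₁, t₂) t' =
          if t₁ = t'.1 then P₁ x.1 a t₁ * P₂ y a t'.2 else 0 := by
        intro t₁
        simp only [hγ]
        by_cases h : t₁ = t'.1
        · simp only [h, if_true]
          have : ∑ t₂ : S₂, P₁ x.1 a t'.1 * P₂ x a t₂ * P₂ y a t'.2
              = P₁ x.1 a t'.1 * P₂ y a t'.2 * ∑ t₂ : S₂, P₂ x a t₂ := by
            rw [Finset.mul_sum]
            exact Finset.sum_congr rfl fun _ _ => by ring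
          rw [this, (hP₂ x a).2, mul_one]
        · simp [h]
      rw [Finset.sum_congr rfl fun t₁ _ => hin t₁]
      rw [Finset.sum_ite_eq' Finset.univ t'.1 (fun t₁ => P₁ x.1 a t₁ * P₂ y a t'.2)]
      simp only [Finset.mem_univ, if_pos, hfact y a t', hxy]
    have hsum_le : ∑ t, ∑ t', dt t t' * γ t t' ≤ M := by
      calc ∑ t, ∑ t', dt t t' * γ t t' ≤ ∑ t, ∑ t', M * γ t t' := by
            refine Finset.sum_le_sum fun t _ => Finset.sum_le_sum fun t' _ => ?_
            by_cases h : t.1 = t'.1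
            · refine mul_le_mul_of_nonneg_right ?_ (hγnn t t')
              obtain ⟨t1, t2⟩ := t
              obtain ⟨t1', t2'⟩ := t'
              simp only at h
              subst h
              exact hM _ _ _
            · simp only [hγ, if_neg h, mul_zero]
              exact le_rfl
        _ = M * ∑ t, ∑ t', γ t t' := by rw [Finset.mul_sum]; simp [Finset.mul_sum]
        _ = M := by
            have h1 : ∑ t, ∑ t', γ t t' = 1 := by
              simp only [hm1]; exact (hP x a).2
            rw [h1, mul_one]
    have hbdd : BddBelow {r | ∃ γ' : S₁ × S₂ → S₁ × S₂ → ℝ,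
        IsCoupling γ' (P x a) (P y a) ∧ r = ∑ t, ∑ t', dt t t' * γ' t t'} := by
      refine ⟨0, ?_⟩
      rintro ρ ⟨γ', hcpl, rfl⟩
      refine Finset.sum_nonneg fun t _ => Finset.sum_nonneg fun t' _ =>
        mul_nonneg (hdt.nonneg _ _) (hcpl.1 t t')
    exact le_trans (csInf_le hbdd ⟨γ, ⟨hγnn, hm1, hm2⟩, rfl⟩) hsum_le
  haveI : Nonempty (S₁ × S₂ × S₂) := ⟨(s₁, si, sj)⟩
  set f : S₁ × S₂ × S₂ → ℝ := fun p => dt (p.1, p.2.1) (p.1, p.2.2) with hf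
  set M := Finset.univ.sup' Finset.univ_nonempty f with hMdef
  have hM : ∀ (u : S₁) (v w : S₂), dt (u, v) (u, w) ≤ M :=
    fun u v w => Finset.le_sup' f (Finset.mem_univ ((u, v, w) : S₁ × S₂ × S₂))
  obtain ⟨b, -, hb⟩ := Finset.exists_mem_eq_sup' (Finset.univ_nonempty (α := S₁ × S₂ × S₂)) f
  have hMle : M ≤ c * M := by
    have h := key M hM (b.1, b.2.1) (b.1, b.2.2) rfl
    calc M = f b := hb
      _ = dt (b.1, b.2.1) (b.1, b.2.2) := rfl
      _ ≤ c * M := h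
  have hM0 : M ≤ 0 := by nlinarith
  have h1 := key M hM (s₁, si) (s₁, sj) rfl
  have h2 := hdt.nonneg (s₁, si) (s₁, sj)
  nlinarith
end
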